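/- arXiv:2404.09434 — 2 statements merged into one kernel-verified Lean document; each statement's English description precedes it below -/
import Mathlib

section
/- Let n ≥ 5. The graph obtained from G_n by deleting the two edges x_1 y_2 and x_2 y_1 and then contracting the two edges x_1 x_2 and y_1 y_2 is isomorphic to G_{n−1}. -/
open SimpleGraph

/-- `G n` is the lexicographic product `Cₙ ∘ K̄₂`: the vertex `(i, false)` plays the role
of `xᵢ` and `(i, true)` plays the role of `yᵢ`, and `xᵢ, yᵢ` are each joined to
`x_{i+1}` and `y_{i+1}` (indices modulo `n`). -/
def lexCycleEmpty (n : ℕ) : SimpleGraph (ZMod n × Bool) :=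
  SimpleGraph.fromRel (fun p q => p.1 + 1 = q.1)

/-- The graph obtained from `G` by identifying vertices along the map `f`
(i.e. the quotient graph: loops are deleted and parallel edges are merged).
Contracting a set of edges corresponds to taking `f` to be the map identifying
the endpoints of each contracted edge. -/
def SimpleGraph.contractMap {V W : Type*} (G : SimpleGraph V) (f : V → W) : SimpleGraph W where
  Adj a b := a ≠ b ∧ ∃ u v, G.Adj u v ∧ f u = a ∧ f v = b
  symm := by
    constructor
    rintro a b ⟨hab, u, v, huv, hu, hv⟩
    exact ⟨hab.symm, v, u, huv.symm, hv, hu⟩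
  loopless := by
    constructor
    rintro a ⟨ha, -⟩
    exact ha rfl

/-- The map identifying the index-`1` and index-`2` vertices of `Gₙ` (preserving the
`x`/`y` side), realizing the contraction of the edges `x₁x₂` and `y₁y₂`:
indices `0` and `1` are kept, and every index `k ≥ 2` becomes `k - 1`. -/
def contractionMap (n : ℕ) : ZMod n × Bool → ZMod (n - 1) × Bool :=
  fun p => (if (p.1).val ≤ 1 then ((p.1).val : ZMod (n - 1))
            else (((p.1).val - 1 : ℕ) : ZMod (n - 1)), p.2)

private lemma zmod_cast_inj {n p q : ℕ} (hp : p < n) (hq : q < n)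
    (h : (p : ZMod n) = q) : p = q := by
  have h2 := congrArg ZMod.val h
  rwa [ZMod.val_cast_of_lt hp, ZMod.val_cast_of_lt hq] at h2

private lemma contractMap_adj {V W : Type*} (G : SimpleGraph V) (f : V → W) (a b : W) :
    (G.contractMap f).Adj a b ↔ a ≠ b ∧ ∃ u v, G.Adj u v ∧ f u = a ∧ f v = b := Iff.rfl

private lemma contractionMap_fst (n : ℕ) (p : ZMod n × Bool) :
    (contractionMap n p).1 = if (p.1).val ≤ 1 then (((p.1).val : ℕ) : ZMod (n - 1))
      else (((p.1).val - 1 : ℕ) : ZMod (n - 1)) := rfl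

private lemma contractionMap_snd (n : ℕ) (p : ZMod n × Bool) :
    (contractionMap n p).2 = p.2 := rfl

/-- Forward direction: an edge of the deleted graph maps to an edge of `G_{n-1}`. -/
private lemma stepA (n : ℕ) (hn : 5 ≤ n) (u v : ZMod n × Bool)
    (hadj : u.1 + 1 = v.1)
    (hmem : s(u, v) ∉ ({s(((1 : ZMod n), false), ((2 : ZMod n), true)),
             s(((1 : ZMod n), true), ((2 : ZMod n), false))} : Set (Sym2 (ZMod n × Bool))))
    (hne : contractionMap n u ≠ contractionMap n v) :
    (contractionMap n u).1 + 1 = (contractionMap n v).1 := by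
  haveI : NeZero n := ⟨by omega⟩
  have hi : u.1.val < n := ZMod.val_lt u.1
  have hu1 : ((u.1.val : ℕ) : ZMod n) = u.1 := ZMod.natCast_rightInverse u.1
  have hv1 : v.1 = ((u.1.val + 1 : ℕ) : ZMod n) := by
    rw [← hadj]
    conv_lhs => rw [← hu1]
    push_cast; ring
  rcases (by omega : u.1.val = 0 ∨ u.1.val = 1 ∨ (2 ≤ u.1.val ∧ u.1.val + 1 < n)
      ∨ u.1.val + 1 = n) with h0 | h1 | ⟨h2, hlt⟩ | hn1
  · -- u index 0, v index 1
    have hvval : v.1.val = 1 := by rw [hv1, h0, ZMod.val_cast_of_lt (by omega)]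
    rw [contractionMap_fst, contractionMap_fst, h0, hvval]
    norm_num
  · -- u index 1, v index 2 : the edge was deleted, contradiction
    have hvval : v.1.val = 2 := by rw [hv1, h1, ZMod.val_cast_of_lt (by omega)]
    exfalso
    have hfu1 : (contractionMap n u).1 = ((1 : ℕ) : ZMod (n - 1)) := by
      rw [contractionMap_fst, h1, if_pos (by omega : (1:ℕ) ≤ 1)]
    have hfv1 : (contractionMap n v).1 = ((1 : ℕ) : ZMod (n - 1)) := by
      rw [contractionMap_fst, hvval, if_neg (by omega : ¬ (2:ℕ) ≤ 1)]
    have hbne : u.2 ≠ v.2 := by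
      intro h
      apply hne
      refine Prod.ext ?_ ?_
      · rw [hfu1, hfv1]
      · rw [contractionMap_snd, contractionMap_snd, h]
    have hu' : u = ((1 : ZMod n), u.2) := by
      refine Prod.ext ?_ rfl
      rw [← hu1, h1]; norm_cast
    have hv' : v = ((2 : ZMod n), v.2) := by
      refine Prod.ext ?_ rfl
      have hcv : ((v.1.val : ℕ) : ZMod n) = v.1 := ZMod.natCast_rightInverse v.1
      rw [← hcv, hvval]; norm_cast
    apply hmem
    cases hbu : u.2 <;> cases hbv : v.2
    · exact absurd (hbu.trans hbv.symm) hbne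
    · rw [hu', hv', hbu, hbv]
      exact Set.mem_insert _ _
    · rw [hu', hv', hbu, hbv]
      exact Set.mem_insert_of_mem _ rfl
    · exact absurd (hbu.trans hbv.symm) hbne
  · -- generic case
    have hvval : v.1.val = u.1.val + 1 := by rw [hv1, ZMod.val_cast_of_lt hlt]
    rw [contractionMap_fst, contractionMap_fst, hvval,
      if_neg (by omega), if_neg (by omega)]
    have e1 : u.1.val + 1 - 1 = (u.1.val - 1) + 1 := by omega
    rw [e1]
    push_cast; ring
  · -- wrap-around: u index n-1, v index 0
    have hvval : v.1.val = 0 := by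
      rw [hv1, hn1, ZMod.natCast_self, ZMod.val_zero]
    rw [contractionMap_fst, contractionMap_fst, hvval,
      if_neg (by omega), if_pos (by omega)]
    have e1 : ((u.1.val - 1 : ℕ) : ZMod (n - 1)) + 1 = (((u.1.val - 1) + 1 : ℕ) : ZMod (n - 1)) := by
      push_cast; ring
    have e2 : (u.1.val - 1) + 1 = n - 1 := by omega
    rw [e1, e2, ZMod.natCast_self]
    norm_cast

/-- Backward direction: an edge of `G_{n-1}` lifts to an edge of the deleted graph. -/
private lemma stepB (n : ℕ) (hn : 5 ≤ n) (a b : ZMod (n - 1) × Bool)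
    (hadj : a.1 + 1 = b.1) :
    ∃ u v : ZMod n × Bool,
      ((lexCycleEmpty n).deleteEdges
          {s(((1 : ZMod n), false), ((2 : ZMod n), true)),
           s(((1 : ZMod n), true), ((2 : ZMod n), false))}).Adj u v ∧
      contractionMap n u = a ∧ contractionMap n v = b := by
  haveI : NeZero n := ⟨by omega⟩
  haveI : NeZero (n - 1) := ⟨by omega⟩
  have hj : a.1.val < n - 1 := ZMod.val_lt a.1
  have ha1 : ((a.1.val : ℕ) : ZMod (n - 1)) = a.1 := ZMod.natCast_rightInverse a.1
  have h1n : (1 : ZMod n) = ((1 : ℕ) : ZMod n) := by norm_cast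
  have h2n : (2 : ZMod n) = ((2 : ℕ) : ZMod n) := by norm_cast
  rcases Nat.eq_zero_or_pos a.1.val with h0 | hpos
  · -- a at index 0 : lift to indices 0 and 1
    refine ⟨((0 : ZMod n), a.2), ((1 : ZMod n), b.2), ?_, ?_, ?_⟩
    · rw [SimpleGraph.deleteEdges_adj, lexCycleEmpty, fromRel_adj]
      refine ⟨⟨?_, Or.inl (by simp)⟩, ?_⟩
      · intro h
        have := congrArg (fun p => (Prod.fst p).val) h
        simp only at this
        rw [ZMod.val_zero, h1n, ZMod.val_cast_of_lt (by omega)] at this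
        omega
      · have hne1 : (0 : ZMod n) ≠ (1 : ZMod n) := by
          rw [h1n, show (0 : ZMod n) = ((0 : ℕ) : ZMod n) by norm_cast]
          intro h; exact absurd (zmod_cast_inj (by omega) (by omega) h) (by omega)
        have hne2 : (0 : ZMod n) ≠ (2 : ZMod n) := by
          rw [h2n, show (0 : ZMod n) = ((0 : ℕ) : ZMod n) by norm_cast]
          intro h; exact absurd (zmod_cast_inj (by omega) (by omega) h) (by omega)
        intro hm
        simp only [Set.mem_insert_iff, Set.mem_singleton_iff, Sym2.eq_iff,
          Prod.mk.injEq] at hm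
        rcases hm with (⟨⟨h, -⟩, -⟩ | ⟨⟨h, -⟩, -⟩) | (⟨⟨h, -⟩, -⟩ | ⟨⟨h, -⟩, -⟩)
        exacts [hne1 h, hne2 h, hne1 h, hne2 h]
    · refine Prod.ext ?_ rfl
      rw [contractionMap_fst]
      simp only [ZMod.val_zero, if_pos (by omega : (0:ℕ) ≤ 1)]
      rw [← ha1, h0]
    · refine Prod.ext ?_ rfl
      rw [contractionMap_fst]
      have hv : ((1 : ZMod n)).val = 1 := by
        rw [h1n, ZMod.val_cast_of_lt (by omega)]
      simp only [hv, if_pos (by omega : (1:ℕ) ≤ 1)]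
      rw [← hadj, ← ha1, h0]
      push_cast; ring
  · -- a at index j ≥ 1 : lift to indices j+1 and j+2
    set j := a.1.val with hjdef
    refine ⟨(((j + 1 : ℕ) : ZMod n), a.2), (((j + 2 : ℕ) : ZMod n), b.2), ?_, ?_, ?_⟩
    · rw [SimpleGraph.deleteEdges_adj, lexCycleEmpty, fromRel_adj]
      have huval : (((j + 1 : ℕ) : ZMod n)).val = j + 1 := ZMod.val_cast_of_lt (by omega)
      have hvval : (((j + 2 : ℕ) : ZMod n)).val = (j + 2) % n := ZMod.val_natCast n _
      refine ⟨⟨?_, Or.inl (by push_cast; ring)⟩, ?_⟩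
      · intro h
        have := congrArg (fun p => (Prod.fst p).val) h
        simp only at this
        rw [huval, hvval] at this
        rcases Nat.lt_or_ge (j + 2) n with hlt | hge
        · rw [Nat.mod_eq_of_lt hlt] at this; omega
        · have : (j + 2) % n = 0 := by
            have : j + 2 = n := by omega
            simp [this]
          omega
      · have hne1 : (((j + 1 : ℕ) : ZMod n)) ≠ (1 : ZMod n) := by
          intro h
          have := congrArg ZMod.val h
          rw [huval, h1n, ZMod.val_cast_of_lt (by omega)] at this
          omega
        have hne2 : (((j + 2 : ℕ) : ZMod n)) ≠ (1 : ZMod n) := by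
          intro h
          have h' := congrArg ZMod.val h
          rw [hvval, h1n, ZMod.val_cast_of_lt (by omega)] at h'
          rcases Nat.lt_or_ge (j + 2) n with hlt | hge
          · rw [Nat.mod_eq_of_lt hlt] at h'; omega
          · have : j + 2 = n := by omega
            rw [this, Nat.mod_self] at h'; omega
        intro hm
        simp only [Set.mem_insert_iff, Set.mem_singleton_iff, Sym2.eq_iff,
          Prod.mk.injEq] at hm
        rcases hm with (⟨⟨h, -⟩, -⟩ | ⟨-, ⟨h, -⟩⟩) | (⟨⟨h, -⟩, -⟩ | ⟨-, ⟨h, -⟩⟩)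
        exacts [hne1 h, hne2 h, hne1 h, hne2 h]
    · refine Prod.ext ?_ rfl
      rw [contractionMap_fst]
      have huval : (((j + 1 : ℕ) : ZMod n)).val = j + 1 := ZMod.val_cast_of_lt (by omega)
      simp only [huval, if_neg (by omega : ¬ j + 1 ≤ 1)]
      rw [show j + 1 - 1 = j by omega, ha1]
    · refine Prod.ext ?_ rfl
      rw [contractionMap_fst]
      rcases Nat.lt_or_ge (j + 2) n with hlt | hge
      · have hvval : (((j + 2 : ℕ) : ZMod n)).val = j + 2 := ZMod.val_cast_of_lt hlt
        simp only [hvval, if_neg (by omega : ¬ j + 2 ≤ 1)]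
        rw [show j + 2 - 1 = j + 1 by omega, ← hadj, ← ha1]
        push_cast; ring
      · have hj2 : j + 2 = n := by omega
        have hvval : (((j + 2 : ℕ) : ZMod n)).val = 0 := by
          rw [hj2, ZMod.natCast_self, ZMod.val_zero]
        simp only [hvval, if_pos (by omega : (0:ℕ) ≤ 1)]
        rw [← hadj, ← ha1]
        have : ((j : ℕ) : ZMod (n - 1)) + 1 = ((j + 1 : ℕ) : ZMod (n - 1)) := by
          push_cast; ring
        rw [this, show j + 1 = n - 1 by omega, ZMod.natCast_self]
        norm_cast

/-- let `n ≥ 5`. The graph obtained from `Gₙ` by deleting the two edges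
`x₁y₂` and `x₂y₁` and then contracting the two edges `x₁x₂` and `y₁y₂` is isomorphic
to `G_{n-1}`. -/
theorem stmt_5 (n : ℕ) (hn : 5 ≤ n) :
    Nonempty
      ((((lexCycleEmpty n).deleteEdges
            {s(((1 : ZMod n), false), ((2 : ZMod n), true)),
             s(((1 : ZMod n), true), ((2 : ZMod n), false))}).contractMap
          (contractionMap n)) ≃g lexCycleEmpty (n - 1)) := by
  refine ⟨⟨Equiv.refl _, ?_⟩⟩
  intro a b
  simp only [Equiv.refl_apply]
  rw [contractMap_adj]
  constructor
  · -- lex (n-1) adjacency → contracted adjacency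
    intro h
    rw [lexCycleEmpty, fromRel_adj] at h
    obtain ⟨hab, hor⟩ := h
    refine ⟨hab, ?_⟩
    rcases hor with h | h
    · obtain ⟨u, v, hadj, hu, hv⟩ := stepB n hn a b h
      exact ⟨u, v, hadj, hu, hv⟩
    · obtain ⟨u, v, hadj, hu, hv⟩ := stepB n hn b a h
      exact ⟨v, u, hadj.symm, hv, hu⟩
  · -- contracted adjacency → lex (n-1) adjacency
    rintro ⟨hab, u, v, hduv, hu, hv⟩
    rw [SimpleGraph.deleteEdges_adj] at hduv
    obtain ⟨hluv, hmem⟩ := hduv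
    rw [lexCycleEmpty, fromRel_adj] at hluv
    obtain ⟨huv, hor⟩ := hluv
    rw [lexCycleEmpty, fromRel_adj]
    refine ⟨hab, ?_⟩
    have hne : contractionMap n u ≠ contractionMap n v := by
      rw [hu, hv]; exact hab
    rcases hor with h | h
    · left
      rw [← hu, ← hv]
      exact stepA n hn u v h hmem hne
    · right
      rw [← hu, ← hv]
      have hsw : s(v, u) = s(u, v) := Sym2.eq_swap
      exact stepA n hn v u h (by rw [hsw]; exact hmem) hne.symm
end

section
/- Let n ≥ 5 and 1 ≤ i ≤ n. The graph obtained from G_n by deleting the four vertices x_i, x_{i+1}, y_i, y_{i+1} (indices modulo n) is connected. -/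
open SimpleGraph

/-- let `n ≥ 5` and `1 ≤ i ≤ n`. The graph obtained from `Gₙ` by deleting the
four vertices `xᵢ, x_{i+1}, yᵢ, y_{i+1}` (indices modulo `n`) is connected. -/
theorem stmt_6 (n : ℕ) (hn : 5 ≤ n) (i : ℕ) (hi : 1 ≤ i) (hin : i ≤ n) :
    ((lexCycleEmpty n).induce
      {v : ZMod n × Bool |
        v ∉ ({((i : ZMod n), false), ((i : ZMod n) + 1, false),
              ((i : ZMod n), true), ((i : ZMod n) + 1, true)} :
            Set (ZMod n × Bool))}).Connected := by
  haveI : NeZero n := ⟨by omega⟩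
  haveI : Fact (1 < n) := ⟨by omega⟩
  set j : ZMod n := (i : ZMod n) with hj
  set S : Set (ZMod n × Bool) :=
    {v : ZMod n × Bool | v ∉ ({(j, false), (j + 1, false), (j, true), (j + 1, true)} :
        Set (ZMod n × Bool))} with hS
  -- membership criterion
  have hone : (1 : ZMod n) ≠ 0 := one_ne_zero
  have hmem : ∀ (c : ZMod n) (b : Bool), c ≠ j → c ≠ j + 1 → (c, b) ∈ S := by
    intro c b h1 h2
    simp only [hS, Set.mem_setOf_eq, Set.mem_insert_iff, Set.mem_singleton_iff, Prod.mk.injEq,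
      not_or]
    refine ⟨fun h => h1 h.1, fun h => h2 h.1, fun h => h1 h.1, fun h => h2 h.1⟩
  have hndvd : ∀ m : ℕ, 1 ≤ m → m ≤ n - 1 → ¬ (n ∣ m) := by
    intro m h1 h2 hd
    have := Nat.le_of_dvd (by omega) hd
    omega
  have hne : ∀ m : ℕ, 1 ≤ m → m ≤ n - 1 → ((m : ZMod n) ≠ 0) := by
    intro m h1 h2 h
    exact hndvd m h1 h2 ((ZMod.natCast_eq_zero_iff m n).mp h)
  have hmemk : ∀ (k : ℕ), k ≤ n - 3 → ∀ b : Bool, (j + 2 + (k : ZMod n), b) ∈ S := by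
    intro k hk b
    refine hmem _ _ ?_ ?_
    · intro h
      have : ((k + 2 : ℕ) : ZMod n) = 0 := by
        push_cast
        linear_combination h
      exact hne (k + 2) (by omega) (by omega) this
    · intro h
      have : ((k + 1 : ℕ) : ZMod n) = 0 := by
        push_cast
        linear_combination h
      exact hne (k + 1) (by omega) (by omega) this
  -- adjacency in the induced graph
  set G := (lexCycleEmpty n).induce S with hG
  have hadj : ∀ (u v : ↥S), (u : ZMod n × Bool).1 + 1 = (v : ZMod n × Bool).1 → G.Adj u v := by
    intro u v h
    refine ⟨?_, Or.inl h⟩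
    intro hcontra
    simp only [Function.Embedding.coe_subtype] at hcontra
    have h1 : (u : ZMod n × Bool).1 = (v : ZMod n × Bool).1 := by rw [hcontra]
    rw [h1] at h
    exact hone (by linear_combination h)
  -- the base vertex
  have hb0 : ((j + 2 + ((0:ℕ) : ZMod n), false)) ∈ S := hmemk 0 (by omega) false
  set v0 : ↥S := ⟨(j + 2 + ((0:ℕ) : ZMod n), false), hb0⟩ with hv0
  -- reachability of all (j+2+k, b) for k ≤ n-3
  have main : ∀ k : ℕ, ∀ hk : k ≤ n - 3, ∀ b : Bool,
      G.Reachable v0 ⟨(j + 2 + (k : ZMod n), b), hmemk k hk b⟩ := by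
    intro k
    induction k with
    | zero =>
      intro hk b
      cases b with
      | false => exact Reachable.refl _
      | true =>
        -- v0 = (j+2, false) ~ (j+3, false) ~ (j+2, true)
        have h1 : G.Adj v0 ⟨(j + 2 + ((1:ℕ) : ZMod n), false), hmemk 1 (by omega) false⟩ := by
          apply hadj; push_cast; ring
        have h2 : G.Adj ⟨(j + 2 + ((0:ℕ) : ZMod n), true), hmemk 0 (by omega) true⟩
            ⟨(j + 2 + ((1:ℕ) : ZMod n), false), hmemk 1 (by omega) false⟩ := by
          apply hadj; push_cast; ring
        exact h1.reachable.trans h2.reachable.symm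
    | succ m ih =>
      intro hk b
      have hm : m ≤ n - 3 := by omega
      have h1 : G.Adj ⟨(j + 2 + (m : ZMod n), b), hmemk m hm b⟩
          ⟨(j + 2 + ((m + 1 : ℕ) : ZMod n), b), hmemk (m+1) hk b⟩ := by
        apply hadj; push_cast; ring
      exact (ih hm b).trans h1.reachable
  -- every vertex of S is of this form
  have cover : ∀ v : ↥S, G.Reachable v0 v := by
    intro v
    obtain ⟨⟨c, b⟩, hv⟩ := v
    have hc1 : c ≠ j := by
      intro h; apply hv; subst h
      cases b <;> simp [hS]
    have hc2 : c ≠ j + 1 := by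
      intro h; apply hv; subst h
      cases b <;> simp [hS]
    set k : ℕ := (c - j - 2).val with hk
    have hck : j + 2 + (k : ZMod n) = c := by
      rw [hk, (ZMod.natCast_val (c - j - 2)).trans (ZMod.cast_id _ _)]
      ring
    have hkn : k < n := ZMod.val_lt _
    have hkbound : k ≤ n - 3 := by
      by_contra hcon
      have : k = n - 2 ∨ k = n - 1 := by omega
      rcases this with h | h
      · apply hc1
        rw [← hck, h]
        have : ((n - 2 : ℕ) : ZMod n) = (n : ZMod n) - 2 := by
          push_cast [Nat.cast_sub (by omega : 2 ≤ n)]; ring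
        rw [this, ZMod.natCast_self]; ring
      · apply hc2
        rw [← hck, h]
        have : ((n - 1 : ℕ) : ZMod n) = (n : ZMod n) - 1 := by
          push_cast [Nat.cast_sub (by omega : 1 ≤ n)]; ring
        rw [this, ZMod.natCast_self]; ring
    have := main k hkbound b
    have heq : ((⟨(j + 2 + (k : ZMod n), b), hmemk k hkbound b⟩ : ↥S)) = ⟨(c, b), hv⟩ :=
      Subtype.ext (by rw [Prod.mk.injEq]; exact ⟨hck, rfl⟩)
    rw [heq] at this
    exact this
  haveI : Nonempty ↥S := ⟨v0⟩
  exact Connected.mk (fun u v => (cover u).symm.trans (cover v))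
end
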